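/- For every integer n ≥ 2 and every pendant edge e of the path P_n (an edge incident to a vertex of degree 1), there exists a minimum bondage set of P_n containing e; that is, there exists a set E₁ of edges of P_n with e ∈ E₁, |E₁| = b(P_n), and γ(P_n − E₁) = γ(P_n) + 1. -/

import Mathlib

/-- A finite set of vertices `D` is a dominating set of `G` if every vertex
is in `D` or adjacent to a vertex in `D`. -/
def SimpleGraph.IsDominatingSet {V : Type*} (G : SimpleGraph V) (D : Finset V) : Prop :=
  ∀ v : V, v ∈ D ∨ ∃ u ∈ D, G.Adj u v

/-- The domination number of `G`: the minimum cardinality of a dominating set. -/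
noncomputable def SimpleGraph.domNum {V : Type*} (G : SimpleGraph V) : ℕ :=
  sInf {n : ℕ | ∃ D : Finset V, G.IsDominatingSet D ∧ D.card = n}

/-- The `k`-synchronous bondage number of `G`: the minimum cardinality of a set of edges
whose deletion increases the domination number by exactly `k`.  (`Sb 1` is the classical
bondage number.) -/
noncomputable def SimpleGraph.synchBondage {V : Type*} (G : SimpleGraph V) (k : ℕ) : ℕ :=
  sInf {m : ℕ | ∃ E' : Finset (Sym2 V), ↑E' ⊆ G.edgeSet ∧
    (G.deleteEdges ↑E').domNum = G.domNum + k ∧ E'.card = m}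


open SimpleGraph Finset


/-- counting lemma -/
lemma count_lemma {n : ℕ} (D S : Finset (Fin n))
    (hdom : ∀ v ∈ S, ∃ u ∈ D, u = v ∨ u.val + 1 = v.val ∨ v.val + 1 = u.val) :
    S.card ≤ 3 * D.card := by
  classical
  have hsub : S ⊆ D.biUnion (fun d => Finset.univ.filter
      (fun v : Fin n => v.val + 1 = d.val ∨ v.val = d.val ∨ v.val = d.val + 1)) := by
    intro v hv
    obtain ⟨u, hu, hcase⟩ := hdom v hv
    refine Finset.mem_biUnion.mpr ⟨u, hu, Finset.mem_filter.mpr ⟨Finset.mem_univ _, ?_⟩⟩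
    rcases hcase with rfl | h | h <;> omega
  calc S.card ≤ _ := Finset.card_le_card hsub
    _ ≤ ∑ d ∈ D, (Finset.univ.filter
      (fun v : Fin n => v.val + 1 = d.val ∨ v.val = d.val ∨ v.val = d.val + 1)).card :=
        Finset.card_biUnion_le
    _ ≤ ∑ _d ∈ D, 3 := by
        refine Finset.sum_le_sum fun d _ => ?_
        have hle : (Finset.univ.filter
            (fun v : Fin n => v.val + 1 = d.val ∨ v.val = d.val ∨ v.val = d.val + 1)).card ≤
            ({d.val - 1, d.val, d.val + 1} : Finset ℕ).card := by
          refine Finset.card_le_card_of_injOn Fin.val (fun v hv => ?_)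
            (Fin.val_injective.injOn)
          simp only [Finset.mem_coe, Finset.mem_insert, Finset.mem_singleton]
          have := (Finset.mem_filter.mp hv).2
          omega
        refine hle.trans ?_
        refine (Finset.card_insert_le _ _).trans ?_
        refine Nat.succ_le_succ ((Finset.card_insert_le _ _).trans ?_)
        simp
    _ = 3 * D.card := by rw [Finset.sum_const, smul_eq_mul, mul_comm]

/-- segment dominating set construction -/
lemma seg_dom {n : ℕ} (a m : ℕ) (hm : 1 ≤ m) (ham : a + m ≤ n) :
    ∃ D : Finset (Fin n), D.card = (m + 2) / 3 ∧
      (∀ u ∈ D, a ≤ u.val ∧ u.val < a + m) ∧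
      ∀ v : Fin n, a ≤ v.val → v.val < a + m →
        ∃ u ∈ D, u = v ∨ u.val + 1 = v.val ∨ v.val + 1 = u.val := by
  classical
  refine ⟨(Finset.range ((m+2)/3)).image
    (fun i => (⟨min (a+m-1) (a+3*i+1), by omega⟩ : Fin n)), ?_, ?_, ?_⟩
  · rw [Finset.card_image_of_injOn, Finset.card_range]
    intro i hi j hj hij
    simp only [Finset.coe_range, Set.mem_Iio] at hi hj
    have := Fin.mk.injEq _ _ _ _ ▸ hij
    simp only [Fin.mk.injEq] at hij
    omega
  · intro u hu
    simp only [Finset.mem_image, Finset.mem_range] at hu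
    obtain ⟨i, hi, rfl⟩ := hu
    simp only []
    omega
  · intro v hav hvm
    refine ⟨⟨min (a+m-1) (a+3*((v.val-a)/3)+1), by omega⟩, ?_, ?_⟩
    · refine Finset.mem_image.mpr ⟨(v.val-a)/3, Finset.mem_range.mpr (by omega), rfl⟩
    · have h := v.isLt
      rcases Nat.lt_trichotomy (min (a+m-1) (a+3*((v.val-a)/3)+1)) v.val with h1 | h1 | h1
      · right; left; simp only []; omega
      · left; exact Fin.ext h1
      · right; right; simp only []; omega

lemma domNum_le {V : Type*} (G : SimpleGraph V) (D : Finset V)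
    (h : G.IsDominatingSet D) : G.domNum ≤ D.card :=
  Nat.sInf_le ⟨D, h, rfl⟩

lemma le_domNum {V : Type*} [Fintype V] [DecidableEq V] (G : SimpleGraph V) (k : ℕ)
    (h : ∀ D : Finset V, G.IsDominatingSet D → k ≤ D.card) : k ≤ G.domNum := by
  refine le_csInf ⟨Fintype.card V, Finset.univ, fun v => Or.inl (Finset.mem_univ v), rfl⟩ ?_
  rintro m ⟨D, hD, rfl⟩
  exact h D hD

lemma domNum_delete {n : ℕ} (a m : ℕ) (hm : 1 ≤ m) (ham : a + m ≤ n)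
    (G : SimpleGraph (Fin n)) (hle : ∀ u v : Fin n, G.Adj u v →
      u.val + 1 = v.val ∨ v.val + 1 = u.val)
    (I : Finset (Fin n)) (hcard : I.card + m = n)
    (hIiso : ∀ v ∈ I, ∀ u, ¬ G.Adj v u)
    (hIseg : ∀ v : Fin n, v ∉ I ↔ (a ≤ v.val ∧ v.val < a + m))
    (hedge : ∀ u v : Fin n, a ≤ u.val → u.val < a + m → a ≤ v.val → v.val < a + m →
      u.val + 1 = v.val → G.Adj u v) :
    G.domNum = I.card + (m + 2) / 3 := by
  classical
  obtain ⟨Ds, hDscard, hDsmem, hDsdom⟩ := seg_dom a m hm ham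
  refine le_antisymm ?_ ?_
  · have hdisj : Disjoint I Ds := by
      refine Finset.disjoint_left.mpr fun v hvI hvD => ?_
      exact ((hIseg v).mpr (hDsmem v hvD)) hvI
    have hdom : G.IsDominatingSet (I ∪ Ds) := by
      intro v
      by_cases hv : v ∈ I
      · exact Or.inl (Finset.mem_union_left _ hv)
      · obtain ⟨ha, hb⟩ := (hIseg v).mp hv
        obtain ⟨u, huD, hcase⟩ := hDsdom v ha hb
        rcases hcase with rfl | h | h
        · exact Or.inl (Finset.mem_union_right _ huD)
        · have := hDsmem u huD
          exact Or.inr ⟨u, Finset.mem_union_right _ huD, hedge u v this.1 this.2 ha hb h⟩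
        · have := hDsmem u huD
          exact Or.inr ⟨u, Finset.mem_union_right _ huD,
            (hedge v u ha hb this.1 this.2 h).symm⟩
    have := domNum_le G (I ∪ Ds) hdom
    rwa [Finset.card_union_of_disjoint hdisj, hDscard] at this
  · refine le_domNum G _ fun D hD => ?_
    have hIsub : I ⊆ D := by
      intro v hv
      rcases hD v with h | ⟨u, _, hadj⟩
      · exact h
      · exact absurd hadj.symm (hIiso v hv u)
    have hcount : (Finset.univ \ I).card ≤ 3 * (D \ I).card := by
      refine count_lemma _ _ fun v hv => ?_
      have hvI : v ∉ I := (Finset.mem_sdiff.mp hv).2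
      rcases hD v with h | ⟨u, huD, hadj⟩
      · exact ⟨v, Finset.mem_sdiff.mpr ⟨h, hvI⟩, Or.inl rfl⟩
      · have huI : u ∉ I := fun huI => (hIiso u huI v) hadj
        exact ⟨u, Finset.mem_sdiff.mpr ⟨huD, huI⟩, Or.inr (hle u v hadj)⟩
    rw [Finset.card_sdiff_of_subset hIsub] at hcount
    rw [Finset.card_sdiff_of_subset (Finset.subset_univ I), Finset.card_univ, Fintype.card_fin] at hcount
    have h1 : I.card ≤ D.card := Finset.card_le_card hIsub
    omega

lemma two_seg_upper {n : ℕ} (a1 m1 a2 m2 : ℕ) (hm1 : 1 ≤ m1) (hm2 : 1 ≤ m2)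
    (h1 : a1 + m1 ≤ n) (h2 : a2 + m2 ≤ n)
    (G : SimpleGraph (Fin n))
    (hcover : ∀ v : Fin n, (a1 ≤ v.val ∧ v.val < a1 + m1) ∨ (a2 ≤ v.val ∧ v.val < a2 + m2))
    (hedge1 : ∀ u v : Fin n, a1 ≤ u.val → u.val < a1 + m1 → a1 ≤ v.val → v.val < a1 + m1 →
      u.val + 1 = v.val → G.Adj u v)
    (hedge2 : ∀ u v : Fin n, a2 ≤ u.val → u.val < a2 + m2 → a2 ≤ v.val → v.val < a2 + m2 →
      u.val + 1 = v.val → G.Adj u v) :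
    G.domNum ≤ (m1 + 2) / 3 + (m2 + 2) / 3 := by
  classical
  obtain ⟨D1, hc1, hmem1, hdom1⟩ := seg_dom a1 m1 hm1 h1
  obtain ⟨D2, hc2, hmem2, hdom2⟩ := seg_dom a2 m2 hm2 h2
  have hdom : G.IsDominatingSet (D1 ∪ D2) := by
    intro v
    rcases hcover v with ⟨ha, hb⟩ | ⟨ha, hb⟩
    · obtain ⟨u, huD, hcase⟩ := hdom1 v ha hb
      rcases hcase with rfl | h | h
      · exact Or.inl (Finset.mem_union_left _ huD)
      · have := hmem1 u huD
        exact Or.inr ⟨u, Finset.mem_union_left _ huD, hedge1 u v this.1 this.2 ha hb h⟩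
      · have := hmem1 u huD
        exact Or.inr ⟨u, Finset.mem_union_left _ huD,
          (hedge1 v u ha hb this.1 this.2 h).symm⟩
    · obtain ⟨u, huD, hcase⟩ := hdom2 v ha hb
      rcases hcase with rfl | h | h
      · exact Or.inl (Finset.mem_union_right _ huD)
      · have := hmem2 u huD
        exact Or.inr ⟨u, Finset.mem_union_right _ huD, hedge2 u v this.1 this.2 ha hb h⟩
      · have := hmem2 u huD
        exact Or.inr ⟨u, Finset.mem_union_right _ huD,
          (hedge2 v u ha hb this.1 this.2 h).symm⟩
  have := domNum_le G _ hdom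
  calc G.domNum ≤ (D1 ∪ D2).card := this
    _ ≤ D1.card + D2.card := Finset.card_union_le _ _
    _ = _ := by rw [hc1, hc2]

lemma edge_struct {n : ℕ} {e : Sym2 (Fin n)} (he : e ∈ (pathGraph n).edgeSet) :
    ∃ x y : Fin n, x.val + 1 = y.val ∧ e = s(x, y) := by
  revert he
  refine Sym2.ind (fun u v he => ?_) e
  rw [SimpleGraph.mem_edgeSet, SimpleGraph.pathGraph_adj] at he
  rcases he with h | h
  · exact ⟨u, v, h, rfl⟩
  · exact ⟨v, u, h, Sym2.eq_swap⟩

lemma pendant_cases {n : ℕ} (x y : Fin n) (hxy : x.val + 1 = y.val)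
    (hp : ∃ v ∈ s(x, y), ((pathGraph n).neighborSet v).ncard = 1) :
    x.val = 0 ∨ y.val + 1 = n := by
  obtain ⟨v, hv, hnc⟩ := hp
  obtain ⟨a, ha⟩ := Set.ncard_eq_one.mp hnc
  rw [Sym2.mem_iff] at hv
  rcases hv with rfl | rfl
  · by_contra hcon
    push_neg at hcon
    obtain ⟨hv0, _⟩ := hcon
    have hlt := v.isLt
    have h1 : (⟨v.val - 1, by omega⟩ : Fin n) ∈ (pathGraph n).neighborSet v := by
      rw [SimpleGraph.mem_neighborSet, SimpleGraph.pathGraph_adj]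
      right; simp only []; omega
    have h2 : y ∈ (pathGraph n).neighborSet v := by
      rw [SimpleGraph.mem_neighborSet, SimpleGraph.pathGraph_adj]
      left; exact hxy
    rw [ha, Set.mem_singleton_iff] at h1 h2
    have e1 := congrArg Fin.val h1
    have e2 := congrArg Fin.val h2
    simp only [] at e1 e2
    omega
  · by_contra hcon
    push_neg at hcon
    obtain ⟨_, hvn⟩ := hcon
    have hlt := v.isLt
    have h1 : (⟨v.val + 1, by omega⟩ : Fin n) ∈ (pathGraph n).neighborSet v := by
      rw [SimpleGraph.mem_neighborSet, SimpleGraph.pathGraph_adj]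
      left; simp only []
    have h2 : x ∈ (pathGraph n).neighborSet v := by
      rw [SimpleGraph.mem_neighborSet, SimpleGraph.pathGraph_adj]
      right; exact hxy
    rw [ha, Set.mem_singleton_iff] at h1 h2
    have e1 := congrArg Fin.val h1
    have e2 := congrArg Fin.val h2
    simp only [] at e1 e2
    omega

lemma bondage_eq {V : Type*} (G : SimpleGraph V) (k c : ℕ)
    (hmem : c ∈ {m : ℕ | ∃ E' : Finset (Sym2 V), ↑E' ⊆ G.edgeSet ∧
      (G.deleteEdges ↑E').domNum = G.domNum + k ∧ E'.card = m})
    (hlb : ∀ m ∈ {m : ℕ | ∃ E' : Finset (Sym2 V), ↑E' ⊆ G.edgeSet ∧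
      (G.deleteEdges ↑E').domNum = G.domNum + k ∧ E'.card = m}, c ≤ m) :
    G.synchBondage k = c :=
  le_antisymm (Nat.sInf_le hmem) (le_csInf ⟨c, hmem⟩ hlb)

lemma zero_not_mem {V : Type*} (G : SimpleGraph V) (k : ℕ) (hk : 0 < k)
    {E' : Finset (Sym2 V)}
    (hd : (G.deleteEdges ↑E').domNum = G.domNum + k) (hc : E'.card = 0) : False := by
  rw [Finset.card_eq_zero] at hc
  subst hc
  rw [Finset.coe_empty, SimpleGraph.deleteEdges_empty] at hd
  omega

/-- every pendant edge of `P_n` (`n ≥ 2`) lies in some minimum bondage set. -/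
theorem pendant_edge_mem_min_bondage_set (n : ℕ) (hn : 2 ≤ n) (e : Sym2 (Fin n))
    (he : e ∈ (SimpleGraph.pathGraph n).edgeSet)
    (hpendant : ∃ v ∈ e, ((SimpleGraph.pathGraph n).neighborSet v).ncard = 1) :
    ∃ E₁ : Finset (Sym2 (Fin n)), e ∈ E₁ ∧ ↑E₁ ⊆ (SimpleGraph.pathGraph n).edgeSet ∧
      E₁.card = (SimpleGraph.pathGraph n).synchBondage 1 ∧
      ((SimpleGraph.pathGraph n).deleteEdges ↑E₁).domNum =
        (SimpleGraph.pathGraph n).domNum + 1 := by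
  classical
  obtain ⟨x, y, hxy, rfl⟩ := edge_struct he
  have hylt : y.val < n := y.isLt
  have hpd : (pathGraph n).domNum = (n + 2) / 3 := by
    have h := domNum_delete 0 n (by omega) (by omega) (pathGraph n)
      (fun u v h => (pathGraph_adj).mp h) ∅ (by simp)
      (by simp)
      (fun v => by simpa using v.isLt)
      (fun u v _ _ _ _ h => pathGraph_adj.mpr (Or.inl h))
    simpa using h
  have hcase := pendant_cases x y hxy hpendant
  by_cases hmod : n % 3 = 1
  · -- bondage number 2
    have hn4 : 4 ≤ n := by omega
    -- no single edge increases the domination number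
    have hone : ∀ e' : Sym2 (Fin n), e' ∈ (pathGraph n).edgeSet →
        ((pathGraph n).deleteEdges {e'}).domNum ≤ (n + 2) / 3 := by
      intro e' he'
      obtain ⟨p, q, hpq, rfl⟩ := edge_struct he'
      have hqlt : q.val < n := q.isLt
      have h := two_seg_upper 0 (p.val + 1) q.val (n - q.val) (by omega) (by omega)
        (by omega) (by omega) ((pathGraph n).deleteEdges {s(p, q)})
        (fun v => by have := v.isLt; omega) ?_ ?_
      · calc ((pathGraph n).deleteEdges {s(p, q)}).domNum
            ≤ (p.val + 1 + 2) / 3 + (n - q.val + 2) / 3 := h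
          _ = (n + 2) / 3 := by omega
      · intro u v hu1 hu2 hv1 hv2 huv
        rw [SimpleGraph.deleteEdges_adj]
        refine ⟨pathGraph_adj.mpr (Or.inl huv), ?_⟩
        intro hmem
        simp only [Set.mem_singleton_iff, Sym2.eq_iff, Fin.ext_iff] at hmem
        omega
      · intro u v hu1 hu2 hv1 hv2 huv
        rw [SimpleGraph.deleteEdges_adj]
        refine ⟨pathGraph_adj.mpr (Or.inl huv), ?_⟩
        intro hmem
        simp only [Set.mem_singleton_iff, Sym2.eq_iff, Fin.ext_iff] at hmem
        omega
    have hlb : ∀ m ∈ {m : ℕ | ∃ E' : Finset (Sym2 (Fin n)),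
        ↑E' ⊆ (pathGraph n).edgeSet ∧
        ((pathGraph n).deleteEdges ↑E').domNum = (pathGraph n).domNum + 1 ∧ E'.card = m},
        2 ≤ m := by
      rintro m ⟨E', hsub, hd, rfl⟩
      by_contra hcon
      push_neg at hcon
      interval_cases h : E'.card
      · exact zero_not_mem (pathGraph n) 1 (by omega) hd h
      · obtain ⟨e', rfl⟩ := Finset.card_eq_one.mp h
        have he' : e' ∈ (pathGraph n).edgeSet := by
          apply hsub; simp
        have := hone e' he'
        rw [Finset.coe_singleton] at hd
        rw [hpd] at hd
        omega
    rcases hcase with hx0 | hyn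
    · -- e = s(x,y) with x = 0, y = 1
      have hy1 : y.val = 1 := by omega
      obtain ⟨z, hz2⟩ : ∃ z : Fin n, z.val = 2 := ⟨⟨2, by omega⟩, rfl⟩
      have hne : s(x, y) ≠ s(y, z) := by
        simp only [ne_eq, Sym2.eq_iff, Fin.ext_iff]
        omega
      have hcard2 : ({s(x, y), s(y, z)} : Finset (Sym2 (Fin n))).card = 2 := by
        rw [Finset.card_insert_of_notMem (by simpa using hne), Finset.card_singleton]
      have hxny : x ≠ y := by simp only [ne_eq, Fin.ext_iff]; omega
      have hdel : ((pathGraph n).deleteEdges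
          ↑({s(x, y), s(y, z)} : Finset (Sym2 (Fin n)))).domNum
          = (pathGraph n).domNum + 1 := by
        have h := domNum_delete 2 (n - 2) (by omega) (by omega)
          ((pathGraph n).deleteEdges ↑({s(x, y), s(y, z)} : Finset (Sym2 (Fin n))))
          (fun u v h => pathGraph_adj.mp (SimpleGraph.deleteEdges_adj.mp h).1)
          {x, y} (by rw [Finset.card_insert_of_notMem (by simpa using hxny),
            Finset.card_singleton]; omega)
          ?_ ?_ ?_
        · rw [h, hpd, Finset.card_insert_of_notMem (by simpa using hxny),
            Finset.card_singleton]
          omega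
        · intro v hv u hadj
          rw [SimpleGraph.deleteEdges_adj, SimpleGraph.pathGraph_adj] at hadj
          obtain ⟨hP, hnm⟩ := hadj
          apply hnm
          simp only [Finset.mem_insert, Finset.mem_singleton] at hv
          have hult := u.isLt
          simp only [Finset.coe_insert, Finset.coe_singleton, Set.mem_insert_iff,
            Set.mem_singleton_iff, Sym2.eq_iff, Fin.ext_iff]
          rcases hv with rfl | rfl <;> omega
        · intro v
          simp only [Finset.mem_insert, Finset.mem_singleton, not_or]
          have := v.isLt
          constructor
          · rintro ⟨h1, h2⟩
            have e1 : v.val ≠ x.val := fun h => h1 (Fin.ext h)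
            have e2 : v.val ≠ y.val := fun h => h2 (Fin.ext h)
            omega
          · rintro ⟨h1, h2⟩
            refine ⟨fun h => ?_, fun h => ?_⟩ <;> subst h <;> omega
        · intro u v hu1 hu2 hv1 hv2 huv
          rw [SimpleGraph.deleteEdges_adj]
          refine ⟨pathGraph_adj.mpr (Or.inl huv), ?_⟩
          intro hmem
          simp only [Finset.coe_insert, Finset.coe_singleton, Set.mem_insert_iff,
            Set.mem_singleton_iff, Sym2.eq_iff, Fin.ext_iff] at hmem
          omega
      refine ⟨{s(x, y), s(y, z)}, Finset.mem_insert_self _ _, ?_, ?_, hdel⟩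
      · intro f hf
        simp only [Finset.coe_insert, Finset.coe_singleton, Set.mem_insert_iff,
          Set.mem_singleton_iff] at hf
        rcases hf with rfl | rfl
        · exact (SimpleGraph.mem_edgeSet _).mpr (pathGraph_adj.mpr (Or.inl hxy))
        · exact (SimpleGraph.mem_edgeSet _).mpr (pathGraph_adj.mpr (Or.inl (by omega)))
      · rw [hcard2]
        exact (bondage_eq _ 1 2 ⟨{s(x, y), s(y, z)}, by
          intro f hf
          simp only [Finset.coe_insert, Finset.coe_singleton, Set.mem_insert_iff,
            Set.mem_singleton_iff] at hf
          rcases hf with rfl | rfl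
          · exact (SimpleGraph.mem_edgeSet _).mpr (pathGraph_adj.mpr (Or.inl hxy))
          · exact (SimpleGraph.mem_edgeSet _).mpr (pathGraph_adj.mpr (Or.inl (by omega))),
          hdel, hcard2⟩ hlb).symm
    · -- e = s(x,y) with y = n-1, x = n-2
      have hxv : x.val = n - 2 := by omega
      obtain ⟨w, hw3⟩ : ∃ w : Fin n, w.val = n - 3 := ⟨⟨n - 3, by omega⟩, rfl⟩
      have hne : s(x, y) ≠ s(w, x) := by
        simp only [ne_eq, Sym2.eq_iff, Fin.ext_iff]
        omega
      have hcard2 : ({s(x, y), s(w, x)} : Finset (Sym2 (Fin n))).card = 2 := by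
        rw [Finset.card_insert_of_notMem (by simpa using hne), Finset.card_singleton]
      have hxny : x ≠ y := by simp only [ne_eq, Fin.ext_iff]; omega
      have hdel : ((pathGraph n).deleteEdges
          ↑({s(x, y), s(w, x)} : Finset (Sym2 (Fin n)))).domNum
          = (pathGraph n).domNum + 1 := by
        have h := domNum_delete 0 (n - 2) (by omega) (by omega)
          ((pathGraph n).deleteEdges ↑({s(x, y), s(w, x)} : Finset (Sym2 (Fin n))))
          (fun u v h => pathGraph_adj.mp (SimpleGraph.deleteEdges_adj.mp h).1)
          {x, y} (by rw [Finset.card_insert_of_notMem (by simpa using hxny),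
            Finset.card_singleton]; omega)
          ?_ ?_ ?_
        · rw [h, hpd, Finset.card_insert_of_notMem (by simpa using hxny),
            Finset.card_singleton]
          omega
        · intro v hv u hadj
          rw [SimpleGraph.deleteEdges_adj, SimpleGraph.pathGraph_adj] at hadj
          obtain ⟨hP, hnm⟩ := hadj
          apply hnm
          simp only [Finset.mem_insert, Finset.mem_singleton] at hv
          have hult := u.isLt
          simp only [Finset.coe_insert, Finset.coe_singleton, Set.mem_insert_iff,
            Set.mem_singleton_iff, Sym2.eq_iff, Fin.ext_iff]
          rcases hv with rfl | rfl <;> omega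
        · intro v
          simp only [Finset.mem_insert, Finset.mem_singleton, not_or]
          have := v.isLt
          constructor
          · rintro ⟨h1, h2⟩
            have e1 : v.val ≠ x.val := fun h => h1 (Fin.ext h)
            have e2 : v.val ≠ y.val := fun h => h2 (Fin.ext h)
            omega
          · rintro ⟨h1, h2⟩
            refine ⟨fun h => ?_, fun h => ?_⟩ <;> subst h <;> omega
        · intro u v hu1 hu2 hv1 hv2 huv
          rw [SimpleGraph.deleteEdges_adj]
          refine ⟨pathGraph_adj.mpr (Or.inl huv), ?_⟩
          intro hmem
          simp only [Finset.coe_insert, Finset.coe_singleton, Set.mem_insert_iff,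
            Set.mem_singleton_iff, Sym2.eq_iff, Fin.ext_iff] at hmem
          omega
      refine ⟨{s(x, y), s(w, x)}, Finset.mem_insert_self _ _, ?_, ?_, hdel⟩
      · intro f hf
        simp only [Finset.coe_insert, Finset.coe_singleton, Set.mem_insert_iff,
          Set.mem_singleton_iff] at hf
        rcases hf with rfl | rfl
        · exact (SimpleGraph.mem_edgeSet _).mpr (pathGraph_adj.mpr (Or.inl hxy))
        · exact (SimpleGraph.mem_edgeSet _).mpr (pathGraph_adj.mpr (Or.inl (by omega)))
      · rw [hcard2]
        exact (bondage_eq _ 1 2 ⟨{s(x, y), s(w, x)}, by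
          intro f hf
          simp only [Finset.coe_insert, Finset.coe_singleton, Set.mem_insert_iff,
            Set.mem_singleton_iff] at hf
          rcases hf with rfl | rfl
          · exact (SimpleGraph.mem_edgeSet _).mpr (pathGraph_adj.mpr (Or.inl hxy))
          · exact (SimpleGraph.mem_edgeSet _).mpr (pathGraph_adj.mpr (Or.inl (by omega))),
          hdel, hcard2⟩ hlb).symm
  · -- bondage number 1
    have hlb : ∀ m ∈ {m : ℕ | ∃ E' : Finset (Sym2 (Fin n)),
        ↑E' ⊆ (pathGraph n).edgeSet ∧
        ((pathGraph n).deleteEdges ↑E').domNum = (pathGraph n).domNum + 1 ∧ E'.card = m},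
        1 ≤ m := by
      rintro m ⟨E', hsub, hd, rfl⟩
      by_contra hcon
      push_neg at hcon
      exact zero_not_mem (pathGraph n) 1 (by omega) hd (by omega)
    rcases hcase with hx0 | hyn
    · -- e = s(x,y) with x = 0; isolate vertex x
      have hy1 : y.val = 1 := by omega
      have hdel : ((pathGraph n).deleteEdges
          ↑({s(x, y)} : Finset (Sym2 (Fin n)))).domNum
          = (pathGraph n).domNum + 1 := by
        have h := domNum_delete 1 (n - 1) (by omega) (by omega)
          ((pathGraph n).deleteEdges ↑({s(x, y)} : Finset (Sym2 (Fin n))))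
          (fun u v h => pathGraph_adj.mp (SimpleGraph.deleteEdges_adj.mp h).1)
          {x} (by rw [Finset.card_singleton]; omega)
          ?_ ?_ ?_
        · rw [h, hpd, Finset.card_singleton]
          omega
        · intro v hv u hadj
          rw [SimpleGraph.deleteEdges_adj, SimpleGraph.pathGraph_adj] at hadj
          obtain ⟨hP, hnm⟩ := hadj
          apply hnm
          simp only [Finset.mem_singleton] at hv
          have hult := u.isLt
          simp only [Finset.coe_singleton, Set.mem_singleton_iff, Sym2.eq_iff, Fin.ext_iff]
          subst hv
          omega
        · intro v
          simp only [Finset.mem_singleton]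
          have := v.isLt
          constructor
          · intro h1
            have e1 : v.val ≠ x.val := fun h => h1 (Fin.ext h)
            omega
          · intro h1 h
            subst h
            omega
        · intro u v hu1 hu2 hv1 hv2 huv
          rw [SimpleGraph.deleteEdges_adj]
          refine ⟨pathGraph_adj.mpr (Or.inl huv), ?_⟩
          intro hmem
          simp only [Finset.coe_singleton, Set.mem_singleton_iff, Sym2.eq_iff,
            Fin.ext_iff] at hmem
          omega
      refine ⟨{s(x, y)}, Finset.mem_singleton_self _, ?_, ?_, hdel⟩
      · intro f hf
        simp only [Finset.coe_singleton, Set.mem_singleton_iff] at hf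
        subst hf
        exact (SimpleGraph.mem_edgeSet _).mpr (pathGraph_adj.mpr (Or.inl hxy))
      · rw [Finset.card_singleton]
        exact (bondage_eq _ 1 1 ⟨{s(x, y)}, by
          intro f hf
          simp only [Finset.coe_singleton, Set.mem_singleton_iff] at hf
          subst hf
          exact (SimpleGraph.mem_edgeSet _).mpr (pathGraph_adj.mpr (Or.inl hxy)),
          hdel, Finset.card_singleton _⟩ hlb).symm
    · -- e = s(x,y) with y = n-1; isolate vertex y
      have hxv : x.val = n - 2 := by omega
      have hdel : ((pathGraph n).deleteEdges
          ↑({s(x, y)} : Finset (Sym2 (Fin n)))).domNum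
          = (pathGraph n).domNum + 1 := by
        have h := domNum_delete 0 (n - 1) (by omega) (by omega)
          ((pathGraph n).deleteEdges ↑({s(x, y)} : Finset (Sym2 (Fin n))))
          (fun u v h => pathGraph_adj.mp (SimpleGraph.deleteEdges_adj.mp h).1)
          {y} (by rw [Finset.card_singleton]; omega)
          ?_ ?_ ?_
        · rw [h, hpd, Finset.card_singleton]
          omega
        · intro v hv u hadj
          rw [SimpleGraph.deleteEdges_adj, SimpleGraph.pathGraph_adj] at hadj
          obtain ⟨hP, hnm⟩ := hadj
          apply hnm
          simp only [Finset.mem_singleton] at hv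
          have hult := u.isLt
          simp only [Finset.coe_singleton, Set.mem_singleton_iff, Sym2.eq_iff, Fin.ext_iff]
          subst hv
          omega
        · intro v
          simp only [Finset.mem_singleton]
          have := v.isLt
          constructor
          · intro h1
            have e1 : v.val ≠ y.val := fun h => h1 (Fin.ext h)
            omega
          · intro h1 h
            subst h
            omega
        · intro u v hu1 hu2 hv1 hv2 huv
          rw [SimpleGraph.deleteEdges_adj]
          refine ⟨pathGraph_adj.mpr (Or.inl huv), ?_⟩
          intro hmem
          simp only [Finset.coe_singleton, Set.mem_singleton_iff, Sym2.eq_iff,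
            Fin.ext_iff] at hmem
          omega
      refine ⟨{s(x, y)}, Finset.mem_singleton_self _, ?_, ?_, hdel⟩
      · intro f hf
        simp only [Finset.coe_singleton, Set.mem_singleton_iff] at hf
        subst hf
        exact (SimpleGraph.mem_edgeSet _).mpr (pathGraph_adj.mpr (Or.inl hxy))
      · rw [Finset.card_singleton]
        exact (bondage_eq _ 1 1 ⟨{s(x, y)}, by
          intro f hf
          simp only [Finset.coe_singleton, Set.mem_singleton_iff] at hf
          subst hf
          exact (SimpleGraph.mem_edgeSet _).mpr (pathGraph_adj.mpr (Or.inl hxy)),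
          hdel, Finset.card_singleton _⟩ hlb).symm
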